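/- (Poincaré–Miranda in dimension 2) Let F : [−1,1]² → ℝ² be continuous with F₁(−1, y) ≤ 0 and F₁(1, y) ≥ 0 for all y ∈ [−1,1], and F₂(x, −1) ≤ 0 and F₂(x, 1) ≥ 0 for all x ∈ [−1,1]. Then there exists p ∈ [−1,1]² with F(p) = (0,0). -/

import Mathlib

open Complex Finset

lemma telescope_div (f : ℕ → ℂ) (n : ℕ) (hf : ∀ k ≤ n, f k ≠ 0) :
    ∏ k ∈ Finset.range n, f (k+1) / f k = f n / f 0 := by
  induction n with
  | zero => simp [div_self (hf 0 le_rfl)]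
  | succ m ih =>
    rw [Finset.prod_range_succ, ih (fun k hk => hf k (hk.trans (Nat.le_succ m)))]
    rw [div_mul_div_comm, mul_comm (f 0), div_eq_div_iff (by exact mul_ne_zero (hf m (Nat.le_succ m)) (hf 0 (Nat.zero_le _))) (hf 0 (Nat.zero_le _))]
    ring

open Real in
lemma int_valued_const {f : ℝ → ℝ} {a b : ℝ} (hab : a ≤ b)
    (hf : ContinuousOn f (Set.Icc a b))
    (hint : ∀ t ∈ Set.Icc a b, ∃ k : ℤ, f t = 2 * π * k) : f a = f b := by
  obtain ⟨ka, hka⟩ := hint a ⟨le_rfl, hab⟩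
  obtain ⟨kb, hkb⟩ := hint b ⟨hab, le_rfl⟩
  have hπ := Real.pi_pos
  by_contra hne
  have key : ∀ u v : ℝ, u ∈ Set.Icc a b → v ∈ Set.Icc a b → ∀ ku kv : ℤ,
      f u = 2*π*ku → f v = 2*π*kv → f u < f v →
      Set.Icc (f u) (f v) ⊆ f '' Set.Icc a b → False := by
    intro u v hu hv ku kv hku hkv hlt hsub
    have hk : (ku : ℝ) < kv := by
      have := hlt; rw [hku, hkv] at this; nlinarith
    have hk' : ku + 1 ≤ kv := by exact_mod_cast hk
    have hmem : f u + π ∈ Set.Icc (f u) (f v) := by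
      constructor
      · linarith
      · rw [hku, hkv]
        have : (ku : ℝ) + 1 ≤ kv := by exact_mod_cast hk'
        nlinarith
    obtain ⟨t, _, hft⟩ := hsub hmem
    obtain ⟨kt, hkt⟩ := hint t ‹_›
    rw [hkt, hku] at hft
    have : (2*kt : ℝ) = 2*ku + 1 := by
      have h2 : π * (2*kt) = π * (2*ku + 1) := by ring_nf; ring_nf at hft; linarith
      exact mul_left_cancel₀ (ne_of_gt hπ) h2
    have : (2*kt : ℤ) = 2*ku + 1 := by exact_mod_cast this
    omega
  rcases lt_or_gt_of_ne hne with h | h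
  · exact key a b ⟨le_rfl, hab⟩ ⟨hab, le_rfl⟩ ka kb hka hkb h
      (intermediate_value_Icc hab hf)
  · exact key b a ⟨hab, le_rfl⟩ ⟨le_rfl, hab⟩ kb ka hkb hka h
      (intermediate_value_Icc' hab hf)

section
variable {Q : ℝ × ℝ → ℂ} {a b c d : ℝ}

lemma exists_lift (hab : a ≤ b) (hcd : c ≤ d)
    (hQ : ContinuousOn Q (Set.Icc a b ×ˢ Set.Icc c d))
    (habs : ∀ p ∈ Set.Icc a b ×ˢ Set.Icc c d, ‖Q p‖ = 1) :
    ∃ θ : ℝ × ℝ → ℝ, ContinuousOn θ (Set.Icc a b ×ˢ Set.Icc c d) ∧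
      ∀ p ∈ Set.Icc a b ×ˢ Set.Icc c d, Complex.exp (θ p * Complex.I) = Q p := by
  set R : Set (ℝ × ℝ) := Set.Icc a b ×ˢ Set.Icc c d with hR
  have hcomp : IsCompact R := (isCompact_Icc).prod isCompact_Icc
  have hUC : UniformContinuousOn Q R := hcomp.uniformContinuousOn_of_continuous hQ
  obtain ⟨δ, hδ, hδ'⟩ := Metric.uniformContinuousOn_iff.mp hUC 1 one_pos
  -- choose n
  obtain ⟨n, hn⟩ := exists_nat_gt (max ((b - a) / δ) ((d - c) / δ))
  have hn0 : 0 < n := by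
    rcases Nat.eq_zero_or_pos n with h | h
    · exfalso; rw [h] at hn
      have h1 : (b - a)/δ ≤ max ((b - a) / δ) ((d - c) / δ) := le_max_left _ _
      have : (0:ℝ) ≤ (b-a)/δ := div_nonneg (by linarith) hδ.le
      push_cast at hn; linarith
    · exact h
  have hnR : (0:ℝ) < n := by exact_mod_cast hn0
  have hstep1 : (b - a) / n < δ := by
    rw [div_lt_iff₀ hnR]
    have h1 : (b - a)/δ < n := lt_of_le_of_lt (le_max_left _ _) hn
    rw [div_lt_iff₀ hδ] at h1; linarith
  have hstep2 : (d - c) / n < δ := by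
    rw [div_lt_iff₀ hnR]
    have h1 : (d - c)/δ < n := lt_of_le_of_lt (le_max_right _ _) hn
    rw [div_lt_iff₀ hδ] at h1; linarith
  set X : ℝ → ℕ → ℝ := fun s k => a + k * (s - a) / n with hX
  set Y : ℝ → ℕ → ℝ := fun t k => c + k * (t - c) / n with hY
  -- basic membership facts
  have hXmem : ∀ s ∈ Set.Icc a b, ∀ k ≤ n, X s k ∈ Set.Icc a b := by
    intro s hs k hk
    have h1 : (0:ℝ) ≤ k * (s - a) / n :=
      div_nonneg (mul_nonneg (Nat.cast_nonneg k) (by linarith [hs.1])) hnR.le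
    have h2 : (k:ℝ) ≤ n := by exact_mod_cast hk
    have h3 : (k:ℝ) * (s - a) / n ≤ s - a := by
      rw [div_le_iff₀ hnR]
      have : (0:ℝ) ≤ s - a := by linarith [hs.1]
      nlinarith
    exact ⟨by simp [hX]; linarith, by simp [hX]; linarith [hs.2]⟩
  have hYmem : ∀ t ∈ Set.Icc c d, ∀ k ≤ n, Y t k ∈ Set.Icc c d := by
    intro t ht k hk
    have h1 : (0:ℝ) ≤ k * (t - c) / n :=
      div_nonneg (mul_nonneg (Nat.cast_nonneg k) (by linarith [ht.1])) hnR.le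
    have h2 : (k:ℝ) ≤ n := by exact_mod_cast hk
    have h3 : (k:ℝ) * (t - c) / n ≤ t - c := by
      rw [div_le_iff₀ hnR]
      have : (0:ℝ) ≤ t - c := by linarith [ht.1]
      nlinarith
    exact ⟨by simp [hY]; linarith, by simp [hY]; linarith [ht.2]⟩
  have hQne : ∀ p ∈ R, Q p ≠ 0 := fun p hp => by
    intro h; have := habs p hp; rw [h] at this; simp at this
  -- closeness of consecutive values
  have hclose : ∀ p q : ℝ × ℝ, p ∈ R → q ∈ R → dist p q < δ →
      Q p / Q q ∈ Complex.slitPlane ∧ ‖Q p / Q q‖ = 1 := by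
    intro p q hp hq hpq
    have h1 : dist (Q p) (Q q) < 1 := hδ' p hp q hq hpq
    have habsq : ‖Q q‖ = 1 := habs q hq
    have hq0 : Q q ≠ 0 := hQne q hq
    have hratio : ‖Q p / Q q - 1‖ < 1 := by
      rw [div_sub_one hq0, norm_div, habsq, div_one]
      rw [Complex.dist_eq] at h1; exact h1
    constructor
    · rw [Complex.mem_slitPlane_iff]
      left
      have := Complex.abs_re_le_norm (Q p / Q q - 1)
      have h2 : |(Q p / Q q).re - 1| < 1 :=
        calc |(Q p / Q q).re - 1| = |(Q p / Q q - 1).re| := by simp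
          _ ≤ ‖Q p / Q q - 1‖ := Complex.abs_re_le_norm _
          _ < 1 := hratio
      have := abs_lt.mp h2; linarith [this.1]
    · rw [norm_div, habs p hp, habsq]; norm_num
  -- the lift
  set θ : ℝ × ℝ → ℝ := fun p =>
    Complex.arg (Q (a, c))
    + ∑ k ∈ Finset.range n, Complex.arg (Q (X p.1 (k+1), c) / Q (X p.1 k, c))
    + ∑ k ∈ Finset.range n, Complex.arg (Q (p.1, Y p.2 (k+1)) / Q (p.1, Y p.2 k)) with hθ
  have hacR : (a, c) ∈ R := ⟨⟨le_rfl, hab⟩, ⟨le_rfl, hcd⟩⟩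
  -- facts about points
  have hXptR : ∀ p ∈ R, ∀ k ≤ n, (X p.1 k, c) ∈ R :=
    fun p hp k hk => ⟨hXmem p.1 hp.1 k hk, ⟨le_rfl, hcd⟩⟩
  have hYptR : ∀ p ∈ R, ∀ k ≤ n, (p.1, Y p.2 k) ∈ R :=
    fun p hp k hk => ⟨hp.1, hYmem p.2 hp.2 k hk⟩
  have hXdist : ∀ p ∈ R, ∀ k, k + 1 ≤ n →
      dist ((X p.1 (k+1), c) : ℝ × ℝ) (X p.1 k, c) < δ := by
    intro p hp k hk
    rw [Prod.dist_eq]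
    simp only [dist_self]
    have : dist (X p.1 (k+1)) (X p.1 k) = (p.1 - a) / n := by
      rw [Real.dist_eq, hX]
      push_cast
      have h0 : (0:ℝ) ≤ (p.1 - a)/n := div_nonneg (by linarith [hp.1.1]) hnR.le
      rw [_root_.abs_of_nonneg]
      · ring
      · calc (0:ℝ) ≤ (p.1 - a)/n := h0
          _ = a + (↑k + 1) * (p.1 - a) / ↑n - (a + ↑k * (p.1 - a) / ↑n) := by ring
    rw [this]
    have hle : (p.1 - a)/n ≤ (b - a)/n := by
      apply div_le_div_of_nonneg_right (by linarith [hp.1.2]) hnR.le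
    simp only [max_lt_iff]
    exact ⟨lt_of_le_of_lt hle hstep1, hδ⟩
  have hYdist : ∀ p ∈ R, ∀ k, k + 1 ≤ n →
      dist ((p.1, Y p.2 (k+1)) : ℝ × ℝ) (p.1, Y p.2 k) < δ := by
    intro p hp k hk
    rw [Prod.dist_eq]
    simp only [dist_self]
    have heq : dist (Y p.2 (k+1)) (Y p.2 k) = (p.2 - c) / n := by
      rw [Real.dist_eq, hY]
      push_cast
      have h0 : (0:ℝ) ≤ (p.2 - c)/n := div_nonneg (by linarith [hp.2.1]) hnR.le
      rw [_root_.abs_of_nonneg]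
      · ring
      · calc (0:ℝ) ≤ (p.2 - c)/n := h0
          _ = c + (↑k + 1) * (p.2 - c) / ↑n - (c + ↑k * (p.2 - c) / ↑n) := by ring
    rw [heq]
    have hle : (p.2 - c)/n ≤ (d - c)/n :=
      div_le_div_of_nonneg_right (by linarith [hp.2.2]) hnR.le
    simp only [max_lt_iff]
    exact ⟨hδ, lt_of_le_of_lt hle hstep2⟩
  -- ratios are in the slit plane with abs one
  have hr1 : ∀ p ∈ R, ∀ k ∈ Finset.range n,
      Q (X p.1 (k+1), c) / Q (X p.1 k, c) ∈ Complex.slitPlane ∧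
      ‖Q (X p.1 (k+1), c) / Q (X p.1 k, c)‖ = 1 := by
    intro p hp k hk
    rw [Finset.mem_range] at hk
    exact hclose _ _ (hXptR p hp (k+1) hk) (hXptR p hp k (le_of_lt (Nat.lt_of_succ_le hk)))
      (hXdist p hp k hk)
  have hr2 : ∀ p ∈ R, ∀ k ∈ Finset.range n,
      Q (p.1, Y p.2 (k+1)) / Q (p.1, Y p.2 k) ∈ Complex.slitPlane ∧
      ‖Q (p.1, Y p.2 (k+1)) / Q (p.1, Y p.2 k)‖ = 1 := by
    intro p hp k hk
    rw [Finset.mem_range] at hk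
    exact hclose _ _ (hYptR p hp (k+1) hk) (hYptR p hp k (le_of_lt (Nat.lt_of_succ_le hk)))
      (hYdist p hp k hk)
  refine ⟨θ, ?_, ?_⟩
  · -- continuity
    apply ContinuousOn.add
    apply ContinuousOn.add continuousOn_const
    · apply continuousOn_finset_sum
      intro k hk
      have hmapX1 : Continuous (fun p : ℝ × ℝ => ((X p.1 (k+1), c) : ℝ × ℝ)) := by
        apply Continuous.prodMk ?_ continuous_const
        simp only [hX]; fun_prop
      have hmapX0 : Continuous (fun p : ℝ × ℝ => ((X p.1 k, c) : ℝ × ℝ)) := by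
        apply Continuous.prodMk ?_ continuous_const
        simp only [hX]; fun_prop
      rw [Finset.mem_range] at hk
      have hden : ContinuousOn (fun p : ℝ × ℝ => Q (X p.1 k, c)) R :=
        hQ.comp hmapX0.continuousOn (fun p hp => hXptR p hp k hk.le)
      have hnum : ContinuousOn (fun p : ℝ × ℝ => Q (X p.1 (k+1), c)) R :=
        hQ.comp hmapX1.continuousOn (fun p hp => hXptR p hp (k+1) hk)
      have hdiv : ContinuousOn (fun p : ℝ × ℝ => Q (X p.1 (k+1), c) / Q (X p.1 k, c)) R :=
        hnum.div hden (fun p hp => hQne _ (hXptR p hp k hk.le))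
      intro p hp
      exact ContinuousAt.comp_continuousWithinAt (g := Complex.arg)
        (Complex.continuousAt_arg (hr1 p hp k (Finset.mem_range.mpr hk)).1) (hdiv p hp)
    · apply continuousOn_finset_sum
      intro k hk
      have hmapY1 : Continuous (fun p : ℝ × ℝ => ((p.1, Y p.2 (k+1)) : ℝ × ℝ)) := by
        apply Continuous.prodMk continuous_fst
        simp only [hY]; fun_prop
      have hmapY0 : Continuous (fun p : ℝ × ℝ => ((p.1, Y p.2 k) : ℝ × ℝ)) := by
        apply Continuous.prodMk continuous_fst
        simp only [hY]; fun_prop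
      rw [Finset.mem_range] at hk
      have hden : ContinuousOn (fun p : ℝ × ℝ => Q (p.1, Y p.2 k)) R :=
        hQ.comp hmapY0.continuousOn (fun p hp => hYptR p hp k hk.le)
      have hnum : ContinuousOn (fun p : ℝ × ℝ => Q (p.1, Y p.2 (k+1))) R :=
        hQ.comp hmapY1.continuousOn (fun p hp => hYptR p hp (k+1) hk)
      have hdiv : ContinuousOn (fun p : ℝ × ℝ => Q (p.1, Y p.2 (k+1)) / Q (p.1, Y p.2 k)) R :=
        hnum.div hden (fun p hp => hQne _ (hYptR p hp k hk.le))
      intro p hp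
      exact ContinuousAt.comp_continuousWithinAt (g := Complex.arg)
        (Complex.continuousAt_arg (hr2 p hp k (Finset.mem_range.mpr hk)).1) (hdiv p hp)
  · -- the exponential property
    intro p hp
    have key : ∀ z : ℂ, ‖z‖ = 1 → Complex.exp (Complex.arg z * Complex.I) = z := by
      intro z hz
      have := Complex.norm_mul_exp_arg_mul_I z
      rw [hz] at this; simpa using this
    have expand : (↑(θ p) : ℂ) * Complex.I
        = (↑(Complex.arg (Q (a, c))) : ℂ) * Complex.I
        + (∑ k ∈ Finset.range n,
            (↑(Complex.arg (Q (X p.1 (k+1), c) / Q (X p.1 k, c))) : ℂ) * Complex.I)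
        + (∑ k ∈ Finset.range n,
            (↑(Complex.arg (Q (p.1, Y p.2 (k+1)) / Q (p.1, Y p.2 k))) : ℂ) * Complex.I) := by
      rw [hθ]
      push_cast
      rw [← Finset.sum_mul, ← Finset.sum_mul]
      ring
    rw [expand, Complex.exp_add, Complex.exp_add, Complex.exp_sum, Complex.exp_sum]
    have e0 : Complex.exp ((↑(Complex.arg (Q (a, c))) : ℂ) * Complex.I) = Q (a, c) :=
      key _ (habs _ hacR)
    have e1 : ∀ k ∈ Finset.range n,
        Complex.exp ((↑(Complex.arg (Q (X p.1 (k+1), c) / Q (X p.1 k, c))) : ℂ) * Complex.I)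
          = Q (X p.1 (k+1), c) / Q (X p.1 k, c) := fun k hk => key _ (hr1 p hp k hk).2
    have e2 : ∀ k ∈ Finset.range n,
        Complex.exp ((↑(Complex.arg (Q (p.1, Y p.2 (k+1)) / Q (p.1, Y p.2 k))) : ℂ) * Complex.I)
          = Q (p.1, Y p.2 (k+1)) / Q (p.1, Y p.2 k) := fun k hk => key _ (hr2 p hp k hk).2
    rw [e0, Finset.prod_congr rfl e1, Finset.prod_congr rfl e2]
    have t1 : ∏ k ∈ Finset.range n, Q (X p.1 (k+1), c) / Q (X p.1 k, c)
        = Q (p.1, c) / Q (a, c) := by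
      have := telescope_div (fun k => Q (X p.1 k, c)) n
        (fun k hk => hQne _ (hXptR p hp k hk))
      rw [this]
      congr 2
      · congr 1
        rw [hX]; field_simp; ring
      · congr 1
        rw [hX]; simp
    have t2 : ∏ k ∈ Finset.range n, Q (p.1, Y p.2 (k+1)) / Q (p.1, Y p.2 k)
        = Q p / Q (p.1, c) := by
      have := telescope_div (fun k => Q (p.1, Y p.2 k)) n
        (fun k hk => hQne _ (hYptR p hp k hk))
      rw [this]
      congr 2
      · congr 1
        · rw [hY]; field_simp; ring
      · congr 1
        rw [hY]; simp
    rw [t1, t2]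
    have h1 : Q (a, c) ≠ 0 := hQne _ hacR
    have h2 : Q (p.1, c) ≠ 0 := hQne _ ⟨hp.1, ⟨le_rfl, hcd⟩⟩
    field_simp
end

open Real Complex in
set_option maxHeartbeats 2000000 in
theorem poincare_miranda_dim2
    (F : ℝ × ℝ → ℝ × ℝ)
    (hcont : ContinuousOn F (Set.Icc (-1:ℝ) 1 ×ˢ Set.Icc (-1:ℝ) 1))
    (h1m : ∀ y ∈ Set.Icc (-1:ℝ) 1, (F (-1, y)).1 ≤ 0)
    (h1p : ∀ y ∈ Set.Icc (-1:ℝ) 1, 0 ≤ (F (1, y)).1)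
    (h2m : ∀ x ∈ Set.Icc (-1:ℝ) 1, (F (x, -1)).2 ≤ 0)
    (h2p : ∀ x ∈ Set.Icc (-1:ℝ) 1, 0 ≤ (F (x, 1)).2) :
    ∃ p ∈ Set.Icc (-1:ℝ) 1 ×ˢ Set.Icc (-1:ℝ) 1, F p = (0, 0) := by
  by_contra hcon
  push_neg at hcon
  set K : Set (ℝ × ℝ) := Set.Icc (-1:ℝ) 1 ×ˢ Set.Icc (-1:ℝ) 1 with hK
  have hπ := Real.pi_pos
  -- clamp
  set cl : ℝ → ℝ := fun u => max (-1) (min 1 u) with hcl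
  have hclcont : Continuous cl := by fun_prop
  have hclmem : ∀ u, cl u ∈ Set.Icc (-1:ℝ) 1 :=
    fun u => ⟨le_max_left _ _, max_le (by norm_num) (min_le_left _ _)⟩
  have hclid : ∀ u, u ∈ Set.Icc (-1:ℝ) 1 → cl u = u := by
    intro u hu
    rw [hcl]; simp only
    rw [min_eq_right hu.2, max_eq_right hu.1]
  -- extended map
  set G : ℝ × ℝ → ℂ := fun p => ↑((F (cl p.1, cl p.2)).1) + ↑((F (cl p.1, cl p.2)).2) * Complex.I
    with hG
  have hGcont : Continuous G := by
    have hmap : Continuous (fun p : ℝ × ℝ => ((cl p.1, cl p.2) : ℝ × ℝ)) := by fun_prop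
    have hF' : Continuous (fun p : ℝ × ℝ => F (cl p.1, cl p.2)) :=
      hcont.comp_continuous hmap (fun p => ⟨hclmem _, hclmem _⟩)
    apply Continuous.add
    · exact Complex.continuous_ofReal.comp (continuous_fst.comp hF')
    · exact (Complex.continuous_ofReal.comp (continuous_snd.comp hF')).mul continuous_const
  have hGre : ∀ p, (G p).re = (F (cl p.1, cl p.2)).1 := by intro p; simp [hG]
  have hGim : ∀ p, (G p).im = (F (cl p.1, cl p.2)).2 := by intro p; simp [hG]
  have hGne : ∀ p ∈ K, G p ≠ 0 := by
    intro p hp h0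
    apply hcon p hp
    have h1 : (G p).re = 0 := by rw [h0]; simp
    have h2 : (G p).im = 0 := by rw [h0]; simp
    rw [hGre, hclid _ hp.1, hclid _ hp.2] at h1
    rw [hGim, hclid _ hp.1, hclid _ hp.2] at h2
    have : ((F p).1, (F p).2) = ((0:ℝ), (0:ℝ)) := by rw [h1, h2]
    simpa using this
  -- boundary loop and circle loop
  set B : ℝ → ℝ × ℝ := fun t => (cl (min (2*t - 1) (5 - 2*t)), cl (min (2*t - 3) (7 - 2*t)))
    with hB
  have hBcont : Continuous B := by fun_prop
  have hBmem : ∀ t, B t ∈ K := fun t => ⟨hclmem _, hclmem _⟩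
  set C : ℝ → ℂ := fun t => Complex.exp (↑(π * t / 2 - 3 * π / 4) * Complex.I) with hC
  have hCcont : Continuous C := by
    apply Complex.continuous_exp.comp
    apply Continuous.mul ?_ continuous_const
    fun_prop
  have hCabs : ∀ t, ‖C t‖ = 1 := fun t => Complex.norm_exp_ofReal_mul_I _
  have hCre : ∀ t, (C t).re = Real.cos (π * t / 2 - 3 * π / 4) :=
    fun t => Complex.exp_ofReal_mul_I_re _
  have hCim : ∀ t, (C t).im = Real.sin (π * t / 2 - 3 * π / 4) :=
    fun t => Complex.exp_ofReal_mul_I_im _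
  -- the homotopy
  set H : ℝ × ℝ → ℂ := fun p =>
    ↑(2 - max p.1 1) * G (min p.1 1 * (B p.2).1, min p.1 1 * (B p.2).2)
    + ↑(max p.1 1 - 1) * C p.2 with hH
  have hHcont : Continuous H := by
    apply Continuous.add
    · apply Continuous.mul
      · fun_prop
      · apply hGcont.comp
        fun_prop
    · apply Continuous.mul ?_ (hCcont.comp continuous_snd)
      fun_prop
  set R : Set (ℝ × ℝ) := Set.Icc (0:ℝ) 2 ×ˢ Set.Icc (0:ℝ) 4 with hRdef
  have hclhi : ∀ u, 1 ≤ u → cl u = 1 := by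
    intro u hu; rw [hcl]; simp only
    rw [min_eq_left hu, max_eq_right (by norm_num : (-1:ℝ) ≤ 1)]
  have hcllo : ∀ u, u ≤ -1 → cl u = -1 := by
    intro u hu; rw [hcl]; simp only
    rw [min_eq_right (le_trans hu (by norm_num)), max_eq_left hu]
  have hclcl : ∀ u, cl (cl u) = cl u := fun u => hclid _ (hclmem u)
  have hHne : ∀ p ∈ R, H p ≠ 0 := by
    rintro ⟨s, t⟩ ⟨hs, ht⟩
    simp only [hH]
    rcases le_or_gt s 1 with hs1 | hs1
    · rw [max_eq_right hs1, min_eq_left hs1]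
      norm_num
      apply hGne
      have hb1 := hclmem ((2*t - 1) ⊓ (5 - 2*t))
      have hb2 := hclmem ((2*t - 3) ⊓ (7 - 2*t))
      rw [Set.mem_Icc] at hb1 hb2
      have hs0 : 0 ≤ s := hs.1
      refine ⟨⟨?_, ?_⟩, ⟨?_, ?_⟩⟩
      · show -1 ≤ s * cl ((2*t - 1) ⊓ (5 - 2*t)); nlinarith [hb1.1, hb1.2]
      · show s * cl ((2*t - 1) ⊓ (5 - 2*t)) ≤ 1; nlinarith [hb1.1, hb1.2]
      · show -1 ≤ s * cl ((2*t - 3) ⊓ (7 - 2*t)); nlinarith [hb2.1, hb2.2]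
      · show s * cl ((2*t - 3) ⊓ (7 - 2*t)) ≤ 1; nlinarith [hb2.1, hb2.2]
    · rw [max_eq_left hs1.le, min_eq_right hs1.le]
      simp only [one_mul]
      intro h0
      have hs2 : s ≤ 2 := hs.2
      have ht0 : 0 ≤ t := ht.1
      have ht4 : t ≤ 4 := ht.2
      -- extract real and imaginary parts
      have hre := congrArg Complex.re h0
      have him := congrArg Complex.im h0
      simp only [Complex.add_re, Complex.add_im, Complex.mul_re, Complex.mul_im,
        Complex.ofReal_re, Complex.ofReal_im, Complex.zero_re, Complex.zero_im,
        zero_mul, sub_zero, add_zero, zero_add] at hre him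
      rw [hGre, hGim] at *
      rw [hCre, hCim] at *
      rcases le_or_gt t 1 with htc | htc
      · -- bottom edge: imaginary part is negative
        have hb2 : (B t).2 = -1 := by
          rw [hB]; simp only
          exact hcllo _ (le_trans (min_le_left _ _) (by linarith))
        rw [hb2] at him
        rw [hclid (-1:ℝ) (by norm_num)] at him
        have hF2 : (F (cl (B t).1, -1)).2 ≤ 0 := h2m _ (hclmem _)
        have hsin : Real.sin (π * t / 2 - 3 * π / 4) < 0 := by
          apply Real.sin_neg_of_neg_of_neg_pi_lt <;> nlinarith
        nlinarith
      rcases le_or_gt t 2 with htc2 | htc2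
      · -- right edge: real part is positive
        have hb1 : (B t).1 = 1 := by
          rw [hB]; simp only
          exact hclhi _ (le_min (by linarith) (by linarith))
        rw [hb1] at hre
        rw [hclid (1:ℝ) (by norm_num)] at hre
        have hF1 : 0 ≤ (F (1, cl (B t).2)).1 := h1p _ (hclmem _)
        have hcos : 0 < Real.cos (π * t / 2 - 3 * π / 4) := by
          apply Real.cos_pos_of_mem_Ioo
          constructor <;> nlinarith
        nlinarith
      rcases le_or_gt t 3 with htc3 | htc3
      · -- top edge: imaginary part is positive
        have hb2 : (B t).2 = 1 := by
          rw [hB]; simp only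
          exact hclhi _ (le_min (by linarith) (by linarith))
        rw [hb2] at him
        rw [hclid (1:ℝ) (by norm_num)] at him
        have hF2 : 0 ≤ (F (cl (B t).1, 1)).2 := h2p _ (hclmem _)
        have hsin : 0 < Real.sin (π * t / 2 - 3 * π / 4) := by
          apply Real.sin_pos_of_pos_of_lt_pi <;> nlinarith
        nlinarith
      · -- left edge: real part is negative
        have hb1 : (B t).1 = -1 := by
          rw [hB]; simp only
          exact hcllo _ (le_trans (min_le_right _ _) (by linarith))
        rw [hb1] at hre
        rw [hclid (-1:ℝ) (by norm_num)] at hre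
        have hF1 : (F (-1, cl (B t).2)).1 ≤ 0 := h1m _ (hclmem _)
        have hcos : Real.cos (π * t / 2 - 3 * π / 4) < 0 := by
          apply Real.cos_neg_of_pi_div_two_lt_of_lt <;> nlinarith
        nlinarith
  -- loop closes up
  have hB40 : B 4 = B 0 := by
    rw [hB]; norm_num
    constructor <;> · rw [hcl]; norm_num
  have hC40 : C 4 = C 0 := by
    rw [hC]
    simp only
    have heq : (↑(π * 4 / 2 - 3 * π / 4) : ℂ) * Complex.I
        = ↑(π * 0 / 2 - 3 * π / 4) * Complex.I + 2 * ↑π * Complex.I := by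
      push_cast; ring
    rw [heq, Complex.exp_add, Complex.exp_two_pi_mul_I, mul_one]
  have hH40 : ∀ s, H (s, 4) = H (s, 0) := by
    intro s; simp only [hH, hB40, hC40]
  -- special values
  have hH0 : ∀ t, H (0, t) = G (0, 0) := by
    intro t
    simp only [hH]
    norm_num
  have hH2 : ∀ t, H (2, t) = C t := by
    intro t
    simp only [hH]
    norm_num
  -- normalized map
  set Q : ℝ × ℝ → ℂ := fun p => H p / ↑‖H p‖ with hQdef
  have hQcont : ContinuousOn Q R := by
    apply ContinuousOn.div hHcont.continuousOn
    · exact (Complex.continuous_ofReal.comp (continuous_norm.comp hHcont)).continuousOn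
    · intro p hp
      simpa using norm_ne_zero_iff.mpr (hHne p hp)
  have hQabs : ∀ p ∈ R, ‖Q p‖ = 1 := by
    intro p hp
    rw [hQdef]
    simp only [norm_div, Complex.norm_real, Real.norm_eq_abs,
      _root_.abs_of_nonneg (norm_nonneg (H p))]
    exact div_self (norm_ne_zero_iff.mpr (hHne p hp))
  have hQeq : ∀ p q, H p = H q → Q p = Q q := by
    intro p q h; rw [hQdef]; simp only [h]
  obtain ⟨θ, hθcont, hθexp⟩ := exists_lift (by norm_num) (by norm_num) hQcont hQabs
  -- membership helpers
  have hmem4 : ∀ s ∈ Set.Icc (0:ℝ) 2, ((s, (4:ℝ)) : ℝ × ℝ) ∈ R :=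
    fun s hs => ⟨hs, by norm_num⟩
  have hmem0 : ∀ s ∈ Set.Icc (0:ℝ) 2, ((s, (0:ℝ)) : ℝ × ℝ) ∈ R :=
    fun s hs => ⟨hs, by norm_num⟩
  have hmemt : ∀ (s : ℝ), s ∈ Set.Icc (0:ℝ) 2 → ∀ t ∈ Set.Icc (0:ℝ) 4, ((s, t) : ℝ × ℝ) ∈ R :=
    fun s hs t ht => ⟨hs, ht⟩
  have hexp1 : ∀ r : ℝ, Complex.exp (↑r * Complex.I) = 1 → ∃ k : ℤ, r = 2 * π * k := by
    intro r hr
    rw [Complex.exp_eq_one_iff] at hr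
    obtain ⟨k, hk⟩ := hr
    refine ⟨k, ?_⟩
    have h2 : ((r : ℝ) : ℂ) = ((2 * π * k : ℝ) : ℂ) := by
      apply mul_right_cancel₀ Complex.I_ne_zero
      rw [hk]; push_cast; ring
    exact_mod_cast h2
  -- exp of differences
  have hdiff : ∀ p q, p ∈ R → q ∈ R → Q p = Q q → ∃ k : ℤ, θ p - θ q = 2 * π * k := by
    intro p q hp hq hQpq
    have : Complex.exp (↑(θ p - θ q) * Complex.I) = 1 := by
      push_cast
      rw [sub_mul, Complex.exp_sub, hθexp p hp, hθexp q hq, hQpq]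
      exact div_self (by
        rw [← hθexp q hq]; exact Complex.exp_ne_zero _)
    exact hexp1 _ this
  -- winding function
  set w : ℝ → ℝ := fun s => θ (s, 4) - θ (s, 0) with hw
  have hwcont : ContinuousOn w (Set.Icc 0 2) := by
    apply ContinuousOn.sub
    · exact hθcont.comp (by fun_prop : Continuous fun s : ℝ => ((s, (4:ℝ)) : ℝ × ℝ)).continuousOn
        (fun s hs => hmem4 s hs)
    · exact hθcont.comp (by fun_prop : Continuous fun s : ℝ => ((s, (0:ℝ)) : ℝ × ℝ)).continuousOn
        (fun s hs => hmem0 s hs)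
  have hwint : ∀ s ∈ Set.Icc (0:ℝ) 2, ∃ k : ℤ, w s = 2 * π * k := by
    intro s hs
    exact hdiff _ _ (hmem4 s hs) (hmem0 s hs) (hQeq _ _ (hH40 s))
  have hw02 : w 0 = w 2 := int_valued_const (by norm_num) hwcont hwint
  -- w 0 = 0
  have h02 : (0:ℝ) ∈ Set.Icc (0:ℝ) 2 := by norm_num
  have h22 : (2:ℝ) ∈ Set.Icc (0:ℝ) 2 := by norm_num
  have hw0 : w 0 = 0 := by
    have hfc : ContinuousOn (fun t : ℝ => θ (0, t) - θ (0, 0)) (Set.Icc 0 4) := by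
      apply ContinuousOn.sub ?_ continuousOn_const
      exact hθcont.comp (Continuous.continuousOn (by fun_prop))
        (fun t ht => hmemt 0 h02 t ht)
    have hfi : ∀ t ∈ Set.Icc (0:ℝ) 4, ∃ k : ℤ, θ (0, t) - θ (0, 0) = 2 * π * k := by
      intro t ht
      exact hdiff _ _ (hmemt 0 h02 t ht) (hmemt 0 h02 0 (by norm_num))
        (hQeq _ _ (by rw [hH0 t, hH0 0]))
    have h := int_valued_const (by norm_num : (0:ℝ) ≤ 4) hfc hfi
    simp only [sub_self] at h
    rw [hw]
    simp only
    linarith [h]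
  -- w 2 = 2π
  have hw2 : w 2 = 2 * π := by
    have hQ2 : ∀ t, Q (2, t) = C t := by
      intro t
      rw [hQdef]
      simp only [hH2 t, hCabs t]
      norm_num
    have hCne : ∀ t, C t ≠ 0 := by
      intro t; rw [hC]; exact Complex.exp_ne_zero _
    have hfc : ContinuousOn (fun t : ℝ => θ (2, t) - (π * t / 2 - 3 * π / 4))
        (Set.Icc 0 4) := by
      apply ContinuousOn.sub ?_ (Continuous.continuousOn (by fun_prop))
      exact hθcont.comp (Continuous.continuousOn (by fun_prop))
        (fun t ht => hmemt 2 h22 t ht)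
    have hfi : ∀ t ∈ Set.Icc (0:ℝ) 4, ∃ k : ℤ,
        θ (2, t) - (π * t / 2 - 3 * π / 4) = 2 * π * k := by
      intro t ht
      apply hexp1
      push_cast
      rw [sub_mul, Complex.exp_sub, hθexp _ (hmemt 2 h22 t ht), hQ2 t]
      rw [show (C t : ℂ) = Complex.exp (↑(π * t / 2 - 3 * π / 4) * Complex.I) from by rw [hC]]
      push_cast
      exact div_self (Complex.exp_ne_zero _)
    have h := int_valued_const (by norm_num : (0:ℝ) ≤ 4) hfc hfi
    rw [hw]
    simp only
    ring_nf at h ⊢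
    linarith [h]
  rw [hw0, hw2] at hw02
  linarith
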